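/- Let d ≥ 2 and suppose ℂ^d admits a family of d+1 mutually unbiased orthonormal bases, with rank-one projections Π_{nk} for n = 1,…,d+1 and k = 1,…,d. Then for every complex d×d matrix ρ with tr(ρ) = 1, one has ρ = Σ_{n=1}^{d+1} Σ_{k=1}^{d} tr(Π_{nk} ρ) · Π_{nk} − I, where I is the d×d identity matrix. -/

import Mathlib

open scoped BigOperators

/-- Rank-one orthogonal projection `|v⟩⟨v|` onto a vector `v ∈ ℂ^d`, as a matrix. -/
noncomputable def proj {d : ℕ} (v : EuclideanSpace ℂ (Fin d)) : Matrix (Fin d) (Fin d) ℂ :=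
  Matrix.of fun i j => v i * star (v j)

/-- A family of orthonormal bases of `ℂ^d` is mutually unbiased if
`|⟨e n k, e m l⟩|² = 1/d` for all `n ≠ m` and all `k, l`. -/
def MutuallyUnbiased {d N : ℕ} (e : Fin N → Fin d → EuclideanSpace ℂ (Fin d)) : Prop :=
  ∀ n m : Fin N, n ≠ m → ∀ k l : Fin d,
    ‖(inner ℂ (e n k) (e m l) : ℂ)‖ ^ 2 = 1 / d

namespace MUBaux

open Matrix

variable {d : ℕ}

lemma proj_conjT (u : EuclideanSpace ℂ (Fin d)) : (proj u)ᴴ = proj u := by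
  ext i j
  simp [proj, Matrix.conjTranspose_apply, mul_comm]

lemma trace_proj (u : EuclideanSpace ℂ (Fin d)) : (proj u).trace = (inner ℂ u u : ℂ) := by
  simp only [Matrix.trace, Matrix.diag, proj, Matrix.of_apply, PiLp.inner_apply,
    RCLike.inner_apply, starRingEnd_apply]

lemma trace_proj_mul_proj (u v : EuclideanSpace ℂ (Fin d)) :
    (proj u * proj v).trace = (inner ℂ u v : ℂ) * (inner ℂ v u : ℂ) := by
  simp only [Matrix.trace, Matrix.diag, Matrix.mul_apply, proj, Matrix.of_apply,
    PiLp.inner_apply, RCLike.inner_apply, starRingEnd_apply]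
  rw [Finset.sum_mul_sum, Finset.sum_comm]
  congr 1; funext i; congr 1; funext j; ring

lemma sum_proj {v : Fin d → EuclideanSpace ℂ (Fin d)} (hv : Orthonormal ℂ v) :
    ∑ k, proj (v k) = 1 := by
  classical
  set A : Matrix (Fin d) (Fin d) ℂ := Matrix.of fun k i => v k i with hA
  have h1 : A * Aᴴ = 1 := by
    ext k l
    have h := (orthonormal_iff_ite.mp hv) l k
    rw [PiLp.inner_apply] at h
    simp only [RCLike.inner_apply, starRingEnd_apply] at h
    simp only [Matrix.mul_apply, Matrix.conjTranspose_apply, hA, Matrix.of_apply,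
      Matrix.one_apply]
    calc ∑ j, v k j * star (v l j) = ∑ j, star (v l j) * v k j := by
          congr 1; funext j; ring
      _ = if l = k then 1 else 0 := by rw [← h]; congr 1; funext j; ring
      _ = if k = l then 1 else 0 := by simp [eq_comm]
  have h2 : Aᴴ * A = 1 := mul_eq_one_comm.mp h1
  ext i j
  have h3 : (Aᴴ * A) i j = (1 : Matrix (Fin d) (Fin d) ℂ) i j := by rw [h2]
  simp only [Matrix.mul_apply, Matrix.conjTranspose_apply, hA, Matrix.of_apply] at h3
  simp only [Matrix.sum_apply, proj, Matrix.of_apply]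
  calc ∑ k, v k i * star (v k j)
      = star (∑ k, star (v k i) * v k j) := by
        rw [star_sum]; congr 1; funext k; rw [StarMul.star_mul, star_star]; ring
    _ = star ((1 : Matrix (Fin d) (Fin d) ℂ) i j) := by rw [h3]
    _ = (1 : Matrix (Fin d) (Fin d) ℂ) i j := by
        by_cases hij : i = j <;> simp [Matrix.one_apply, hij]

section

variable {e : Fin (d + 1) → Fin d → EuclideanSpace ℂ (Fin d)}

lemma trace_proj_one (horth : ∀ n, Orthonormal ℂ (e n)) (n : Fin (d+1)) (k : Fin d) :
    (proj (e n k)).trace = 1 := by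
  rw [trace_proj]
  have := (orthonormal_iff_ite.mp (horth n)) k k
  simpa using this

lemma trace_pp_same (horth : ∀ n, Orthonormal ℂ (e n)) (n : Fin (d+1)) (k l : Fin d) :
    (proj (e n k) * proj (e n l)).trace = if k = l then 1 else 0 := by
  rw [trace_proj_mul_proj]
  have h1 := (orthonormal_iff_ite.mp (horth n)) k l
  have h2 := (orthonormal_iff_ite.mp (horth n)) l k
  rw [h1, h2]
  by_cases hkl : k = l <;> simp [hkl, eq_comm]

lemma trace_pp_ne (hmub : MutuallyUnbiased e) {n m : Fin (d+1)} (hnm : n ≠ m) (k l : Fin d) :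
    (proj (e n k) * proj (e m l)).trace = ((d : ℂ))⁻¹ := by
  rw [trace_proj_mul_proj]
  have h1 : (inner ℂ (e m l) (e n k) : ℂ) = starRingEnd ℂ (inner ℂ (e n k) (e m l)) :=
    (inner_conj_symm _ _).symm
  rw [h1, Complex.mul_conj]
  have h := hmub n m hnm k l
  have h2 : Complex.normSq (inner ℂ (e n k) (e m l) : ℂ)
      = ‖(inner ℂ (e n k) (e m l) : ℂ)‖ ^ 2 := by
    rw [← Complex.sq_norm]
  rw [h2, h]
  push_cast
  rw [one_div]

end

/-- The superoperator `X ↦ ∑ tr(Π X) • Π`. -/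
noncomputable def Smap (e : Fin (d + 1) → Fin d → EuclideanSpace ℂ (Fin d)) :
    Matrix (Fin d) (Fin d) ℂ →ₗ[ℂ] Matrix (Fin d) (Fin d) ℂ where
  toFun X := ∑ n, ∑ k, (proj (e n k) * X).trace • proj (e n k)
  map_add' X Y := by
    simp [Matrix.mul_add, Matrix.trace_add, add_smul, Finset.sum_add_distrib]
  map_smul' c X := by
    simp [Matrix.mul_smul, Matrix.trace_smul, smul_smul, Finset.smul_sum]

lemma Smap_apply (e : Fin (d + 1) → Fin d → EuclideanSpace ℂ (Fin d))
    (X : Matrix (Fin d) (Fin d) ℂ) :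
    Smap e X = ∑ n, ∑ k, (proj (e n k) * X).trace • proj (e n k) := rfl

/-- `L X = S X - X - tr X • 1`. -/
noncomputable def Lmap (e : Fin (d + 1) → Fin d → EuclideanSpace ℂ (Fin d)) :
    Matrix (Fin d) (Fin d) ℂ →ₗ[ℂ] Matrix (Fin d) (Fin d) ℂ :=
  Smap e - LinearMap.id - (Matrix.traceLinearMap (Fin d) ℂ ℂ).smulRight 1

lemma Lmap_apply (e : Fin (d + 1) → Fin d → EuclideanSpace ℂ (Fin d))
    (X : Matrix (Fin d) (Fin d) ℂ) :
    Lmap e X = Smap e X - X - X.trace • 1 := rfl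

section Main

variable {e : Fin (d + 1) → Fin d → EuclideanSpace ℂ (Fin d)}
  (horth : ∀ n, Orthonormal ℂ (e n)) (hmub : MutuallyUnbiased e)

include horth hmub

/-- Resolution of identity for each basis. -/
lemma sum_trace_proj_mul (m : Fin (d+1))
    (X : Matrix (Fin d) (Fin d) ℂ) :
    ∑ l, (proj (e m l) * X).trace = X.trace := by
  rw [← Matrix.trace_sum, ← Matrix.sum_mul, sum_proj (horth m), one_mul]

lemma trace_proj_Smap (hd : 2 ≤ d) (n : Fin (d+1)) (k : Fin d)
    (X : Matrix (Fin d) (Fin d) ℂ) :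
    (proj (e n k) * Smap e X).trace = (proj (e n k) * X).trace + X.trace := by
  have hdc : (d : ℂ) ≠ 0 := Nat.cast_ne_zero.mpr (by omega)
  rw [Smap_apply, Matrix.mul_sum, Matrix.trace_sum]
  have step : ∀ m : Fin (d+1),
      (proj (e n k) * ∑ l, (proj (e m l) * X).trace • proj (e m l)).trace
      = if m = n then (proj (e n k) * X).trace else X.trace * (d:ℂ)⁻¹ := by
    intro m
    rw [Matrix.mul_sum, Matrix.trace_sum]
    simp only [Matrix.mul_smul, Matrix.trace_smul, smul_eq_mul]
    by_cases hmn : m = n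
    · subst hmn
      simp only [if_pos rfl]
      calc ∑ l, (proj (e m l) * X).trace * (proj (e m k) * proj (e m l)).trace
          = ∑ l, (proj (e m l) * X).trace * (if k = l then 1 else 0) := by
            refine Finset.sum_congr rfl fun l _ => ?_
            rw [trace_pp_same horth m k l]
        _ = (proj (e m k) * X).trace := by
            simp [mul_ite, Finset.sum_ite_eq]
    · rw [if_neg hmn]
      have hnm : n ≠ m := fun h => hmn h.symm
      calc ∑ l, (proj (e m l) * X).trace * (proj (e n k) * proj (e m l)).trace
          = ∑ l, (proj (e m l) * X).trace * (d:ℂ)⁻¹ := by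
            refine Finset.sum_congr rfl fun l _ => ?_
            rw [trace_pp_ne hmub hnm k l]
        _ = (∑ l, (proj (e m l) * X).trace) * (d:ℂ)⁻¹ := by rw [Finset.sum_mul]
        _ = X.trace * (d:ℂ)⁻¹ := by rw [sum_trace_proj_mul horth hmub m X]
  rw [Finset.sum_congr rfl fun m _ => step m]
  rw [Finset.sum_ite, Finset.sum_const, Finset.sum_const]
  rw [Finset.filter_eq', if_pos (Finset.mem_univ n), Finset.filter_ne',
    Finset.card_erase_of_mem (Finset.mem_univ n)]
  simp only [Finset.card_singleton, one_smul, Finset.card_univ, Fintype.card_fin,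
    Nat.add_sub_cancel, nsmul_eq_mul]
  rw [show ((d : ℕ) : ℂ) * (X.trace * (d:ℂ)⁻¹) = X.trace * ((d:ℂ) * (d:ℂ)⁻¹) by ring,
    mul_inv_cancel₀ hdc, mul_one]

lemma sum_sum_proj : ∑ n, ∑ k, proj (e n k) = ((d:ℂ)+1) • (1 : Matrix (Fin d) (Fin d) ℂ) := by
  rw [Finset.sum_congr rfl fun n _ => sum_proj (horth n)]
  rw [Finset.sum_const, Finset.card_univ, Fintype.card_fin]
  rw [show ((d:ℂ)+1) = ((d+1 : ℕ) : ℂ) by push_cast; ring, Nat.cast_smul_eq_nsmul]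

lemma Smap_Smap (hd : 2 ≤ d) (X : Matrix (Fin d) (Fin d) ℂ) :
    Smap e (Smap e X) = Smap e X + (((d:ℂ)+1) * X.trace) • 1 := by
  rw [Smap_apply e (Smap e X)]
  calc ∑ n, ∑ k, (proj (e n k) * Smap e X).trace • proj (e n k)
      = ∑ n, ∑ k, ((proj (e n k) * X).trace • proj (e n k) + X.trace • proj (e n k)) := by
        refine Finset.sum_congr rfl fun n _ => Finset.sum_congr rfl fun k _ => ?_
        rw [trace_proj_Smap horth hmub hd n k X, add_smul]
    _ = (∑ n, ∑ k, (proj (e n k) * X).trace • proj (e n k))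
        + X.trace • (∑ n, ∑ k, proj (e n k)) := by
        simp only [Finset.sum_add_distrib, Finset.smul_sum]
    _ = Smap e X + (((d:ℂ)+1) * X.trace) • 1 := by
        rw [sum_sum_proj horth hmub, ← Smap_apply, smul_smul, mul_comm]

lemma Smap_one : Smap e 1 = ((d:ℂ)+1) • (1 : Matrix (Fin d) (Fin d) ℂ) := by
  rw [Smap_apply]
  simp only [Matrix.mul_one, trace_proj_one horth, one_smul]
  exact sum_sum_proj horth hmub

lemma trace_Smap (X : Matrix (Fin d) (Fin d) ℂ) :
    (Smap e X).trace = ((d:ℂ)+1) * X.trace := by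
  rw [Smap_apply, Matrix.trace_sum]
  calc ∑ n, (∑ k, (proj (e n k) * X).trace • proj (e n k)).trace
      = ∑ n : Fin (d+1), X.trace := by
        refine Finset.sum_congr rfl fun n _ => ?_
        rw [Matrix.trace_sum]
        calc ∑ k, ((proj (e n k) * X).trace • proj (e n k)).trace
            = ∑ k, (proj (e n k) * X).trace := by
              refine Finset.sum_congr rfl fun k _ => ?_
              rw [Matrix.trace_smul, trace_proj_one horth, smul_eq_mul, mul_one]
          _ = X.trace := sum_trace_proj_mul horth hmub n X
    _ = ((d:ℂ)+1) * X.trace := by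
        rw [Finset.sum_const, Finset.card_univ, Fintype.card_fin, nsmul_eq_mul]
        push_cast; ring

lemma trace_Lmap (X : Matrix (Fin d) (Fin d) ℂ) : (Lmap e X).trace = 0 := by
  rw [Lmap_apply, Matrix.trace_sub, Matrix.trace_sub, Matrix.trace_smul,
    Matrix.trace_one, trace_Smap horth hmub, Fintype.card_fin, smul_eq_mul]
  ring

lemma Smap_Lmap (hd : 2 ≤ d) (X : Matrix (Fin d) (Fin d) ℂ) :
    Smap e (Lmap e X) = 0 := by
  rw [Lmap_apply, map_sub, map_sub, LinearMap.map_smul, Smap_one horth hmub,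
    Smap_Smap horth hmub hd, smul_smul, mul_comm X.trace]
  abel

lemma Lmap_Lmap (hd : 2 ≤ d) (X : Matrix (Fin d) (Fin d) ℂ) :
    Lmap e (Lmap e X) = -(Lmap e X) := by
  rw [Lmap_apply e (Lmap e X), Smap_Lmap horth hmub hd, trace_Lmap horth hmub]
  simp

lemma star_trace_proj_mul (u : EuclideanSpace ℂ (Fin d)) (X : Matrix (Fin d) (Fin d) ℂ) :
    star ((proj u * X).trace) = (Xᴴ * proj u).trace := by
  rw [← Matrix.trace_conjTranspose, Matrix.conjTranspose_mul, proj_conjT]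

lemma adjoint_Smap (X Y : Matrix (Fin d) (Fin d) ℂ) :
    (Xᴴ * Smap e Y).trace = ((Smap e X)ᴴ * Y).trace := by
  rw [Smap_apply, Smap_apply]
  simp only [Matrix.mul_sum, Matrix.sum_mul, Matrix.conjTranspose_sum,
    Matrix.conjTranspose_smul, proj_conjT, Matrix.mul_smul, Matrix.smul_mul,
    Matrix.trace_sum, Matrix.trace_smul, smul_eq_mul]
  refine Finset.sum_congr rfl fun n _ => Finset.sum_congr rfl fun k _ => ?_
  rw [← star_trace_proj_mul horth hmub]
  ring

lemma adjoint_Lmap (X Y : Matrix (Fin d) (Fin d) ℂ) :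
    (Xᴴ * Lmap e Y).trace = ((Lmap e X)ᴴ * Y).trace := by
  rw [Lmap_apply, Lmap_apply]
  simp only [Matrix.conjTranspose_sub, Matrix.conjTranspose_smul,
    Matrix.conjTranspose_one, Matrix.mul_sub, Matrix.sub_mul, Matrix.trace_sub,
    Matrix.mul_smul, Matrix.smul_mul, Matrix.trace_smul, Matrix.mul_one,
    Matrix.one_mul, smul_eq_mul]
  rw [adjoint_Smap horth hmub, Matrix.trace_conjTranspose]
  simp only [RCLike.star_def]
  ring

lemma trace_conjT_mul_self (M : Matrix (Fin d) (Fin d) ℂ) :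
    (Mᴴ * M).trace = ((∑ i, ∑ j, Complex.normSq (M i j) : ℝ) : ℂ) := by
  simp only [Matrix.trace, Matrix.diag, Matrix.mul_apply, Matrix.conjTranspose_apply]
  push_cast
  rw [Finset.sum_comm]
  refine Finset.sum_congr rfl fun i _ => Finset.sum_congr rfl fun j _ => ?_
  rw [mul_comm]
  exact_mod_cast Complex.mul_conj (M i j)

lemma norm_Lmap (hd : 2 ≤ d) (X : Matrix (Fin d) (Fin d) ℂ) :
    ((∑ i, ∑ j, Complex.normSq ((Lmap e X) i j) : ℝ) : ℂ)
      = -((Xᴴ * Lmap e X).trace) := by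
  rw [← trace_conjT_mul_self horth hmub, ← adjoint_Lmap horth hmub X (Lmap e X),
    Lmap_Lmap horth hmub hd]
  simp [Matrix.mul_neg]


omit horth hmub in
lemma trace_single_mul (a b : Fin d) (M : Matrix (Fin d) (Fin d) ℂ) :
    (Matrix.single a b (1:ℂ) * M).trace = M b a := by
  rw [Matrix.trace]
  rw [Finset.sum_eq_single a]
  · simp [Matrix.diag]
  · intro i _ hi
    simp [Matrix.diag, Matrix.single_mul_apply_of_ne (1:ℂ) a b i i hi]
  · simp

omit horth hmub in
lemma conjT_single (a b : Fin d) :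
    (Matrix.single a b (1:ℂ))ᴴ = Matrix.single b a 1 := by
  ext i j
  simp only [Matrix.conjTranspose_apply, Matrix.single, Matrix.of_apply]
  by_cases h1 : a = j <;> by_cases h2 : b = i <;> simp [h1, h2]

omit horth hmub in
lemma swap4 (F : Fin (d+1) → Fin d → Fin d → Fin d → ℂ) :
    ∑ a : Fin d, ∑ b : Fin d, ∑ n : Fin (d+1), ∑ k : Fin d, F n k a b
      = ∑ n : Fin (d+1), ∑ k : Fin d, ∑ a : Fin d, ∑ b : Fin d, F n k a b := by
  calc ∑ a : Fin d, ∑ b : Fin d, ∑ n : Fin (d+1), ∑ k : Fin d, F n k a b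
      = ∑ a : Fin d, ∑ n : Fin (d+1), ∑ b : Fin d, ∑ k : Fin d, F n k a b :=
        Finset.sum_congr rfl fun a _ => Finset.sum_comm
    _ = ∑ a : Fin d, ∑ n : Fin (d+1), ∑ k : Fin d, ∑ b : Fin d, F n k a b :=
        Finset.sum_congr rfl fun a _ => Finset.sum_congr rfl fun n _ => Finset.sum_comm
    _ = ∑ n : Fin (d+1), ∑ a : Fin d, ∑ k : Fin d, ∑ b : Fin d, F n k a b :=
        Finset.sum_comm
    _ = ∑ n : Fin (d+1), ∑ k : Fin d, ∑ a : Fin d, ∑ b : Fin d, F n k a b :=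
        Finset.sum_congr rfl fun n _ => Finset.sum_comm

lemma sum_trace_L_basis (hd : 2 ≤ d) :
    ∑ a : Fin d, ∑ b : Fin d,
      (((Matrix.single a b (1:ℂ))ᴴ) * Lmap e (Matrix.single a b 1)).trace = 0 := by
  have hterm : ∀ a b : Fin d,
      ((Matrix.single a b (1:ℂ))ᴴ * Lmap e (Matrix.single a b 1)).trace
      = (Smap e (Matrix.single a b 1)) a b - 1 - (if a = b then (1:ℂ) else 0) := by
    intro a b
    rw [conjT_single, Lmap_apply]
    rw [Matrix.mul_sub, Matrix.mul_sub, Matrix.trace_sub, Matrix.trace_sub]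
    rw [trace_single_mul b a (Smap e (Matrix.single a b 1))]
    rw [trace_single_mul b a (Matrix.single a b 1)]
    rw [Matrix.mul_smul, Matrix.trace_smul, trace_single_mul b a 1, smul_eq_mul]
    congr 2
    · exact Matrix.single_apply_same a b 1
    · by_cases hab : a = b
      · subst hab
        rw [Matrix.trace_single_eq_same, Matrix.one_apply_eq, mul_one, if_pos rfl]
      · rw [Matrix.trace_single_eq_of_ne a b 1 hab, zero_mul,
          if_neg hab]
  have hS : ∑ a : Fin d, ∑ b : Fin d, (Smap e (Matrix.single a b 1)) a b
      = ((d:ℂ)+1) * d := by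
    have h1 : ∀ a b : Fin d, (Smap e (Matrix.single a b 1)) a b
        = ∑ n, ∑ k, proj (e n k) b a * proj (e n k) a b := by
      intro a b
      rw [Smap_apply]
      simp only [Matrix.sum_apply, Matrix.smul_apply, smul_eq_mul]
      refine Finset.sum_congr rfl fun n _ => Finset.sum_congr rfl fun k _ => ?_
      rw [Matrix.trace_mul_comm, trace_single_mul]
    calc ∑ a : Fin d, ∑ b : Fin d, (Smap e (Matrix.single a b 1)) a b
        = ∑ a : Fin d, ∑ b : Fin d, ∑ n, ∑ k, proj (e n k) b a * proj (e n k) a b := by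
          refine Finset.sum_congr rfl fun a _ => Finset.sum_congr rfl fun b _ => h1 a b
      _ = ∑ n, ∑ k, ∑ a : Fin d, ∑ b : Fin d, proj (e n k) b a * proj (e n k) a b :=
          swap4 _
      _ = ∑ n : Fin (d+1), ∑ k : Fin d, (1:ℂ) := by
          refine Finset.sum_congr rfl fun n _ => Finset.sum_congr rfl fun k _ => ?_
          calc ∑ a : Fin d, ∑ b : Fin d, proj (e n k) b a * proj (e n k) a b
              = ∑ a : Fin d, (proj (e n k) * proj (e n k)) a a := by
                refine Finset.sum_congr rfl fun a _ => ?_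
                rw [Matrix.mul_apply]
                exact Finset.sum_congr rfl fun b _ => mul_comm _ _
            _ = (proj (e n k) * proj (e n k)).trace := rfl
            _ = 1 := by rw [trace_pp_same horth n k k, if_pos rfl]
      _ = ((d:ℂ)+1) * d := by
          simp only [Finset.sum_const, Finset.card_univ, Fintype.card_fin, nsmul_eq_mul,
            mul_one]
          push_cast; ring
  rw [Finset.sum_congr rfl fun a _ => Finset.sum_congr rfl fun b _ => hterm a b]
  simp only [Finset.sum_sub_distrib]
  rw [hS]
  have h2 : ∑ a : Fin d, ∑ b : Fin d, (1:ℂ) = (d:ℂ) * d := by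
    simp only [Finset.sum_const, Finset.card_univ, Fintype.card_fin, nsmul_eq_mul, mul_one]
  have h3 : ∑ a : Fin d, ∑ b : Fin d, (if a = b then (1:ℂ) else 0) = (d:ℂ) := by
    simp [Finset.sum_ite_eq]
  rw [h2, h3]
  ring

omit horth hmub in
lemma sum2_nonneg_zero {I J : Type*} [Fintype I] [Fintype J] (f : I → J → ℝ)
    (h0 : ∀ i j, 0 ≤ f i j) (h : ∑ i, ∑ j, f i j = 0) : ∀ i j, f i j = 0 := by
  intro i j
  have h1 : ∀ i' ∈ Finset.univ, (0:ℝ) ≤ ∑ j', f i' j' :=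
    fun i' _ => Finset.sum_nonneg fun j' _ => h0 i' j'
  have h2 := (Finset.sum_eq_zero_iff_of_nonneg h1).mp h i (Finset.mem_univ i)
  exact (Finset.sum_eq_zero_iff_of_nonneg fun j' _ => h0 i j').mp h2 j (Finset.mem_univ j)

lemma Lmap_basis_zero (hd : 2 ≤ d) (a b : Fin d) :
    Lmap e (Matrix.single a b (1:ℂ)) = 0 := by
  set r : Fin d → Fin d → ℝ := fun a b =>
    ∑ i, ∑ j, Complex.normSq ((Lmap e (Matrix.single a b 1)) i j) with hr
  have hsum := sum_trace_L_basis horth hmub hd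
  have hterm : ∀ a b : Fin d,
      ((Matrix.single a b (1:ℂ))ᴴ * Lmap e (Matrix.single a b 1)).trace
        = -((r a b : ℝ) : ℂ) := by
    intro a b
    have hn := norm_Lmap horth hmub hd (Matrix.single a b 1)
    simp only [hr]
    linear_combination hn
  rw [Finset.sum_congr rfl fun a _ => Finset.sum_congr rfl fun b _ => hterm a b] at hsum
  have hsum2 : ∑ a : Fin d, ∑ b : Fin d, r a b = 0 := by
    have hc : ((∑ a : Fin d, ∑ b : Fin d, r a b : ℝ) : ℂ) = 0 := by
      push_cast
      rw [← neg_eq_zero, ← hsum]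
      simp
    exact_mod_cast hc
  have hr0 : r a b = 0 :=
    sum2_nonneg_zero r
      (fun a b => Finset.sum_nonneg fun i _ => Finset.sum_nonneg fun j _ =>
        Complex.normSq_nonneg _) hsum2 a b
  have hentries := sum2_nonneg_zero
    (fun i j => Complex.normSq ((Lmap e (Matrix.single a b 1)) i j))
    (fun i j => Complex.normSq_nonneg _) hr0
  ext i j
  have hij := hentries i j
  simpa [Complex.normSq_eq_zero] using hij

lemma Lmap_eq_zero (hd : 2 ≤ d) (X : Matrix (Fin d) (Fin d) ℂ) :
    Lmap e X = 0 := by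
  have hrep := Matrix.matrix_eq_sum_single X
  calc Lmap e X = Lmap e (∑ a, ∑ b, Matrix.single a b (X a b)) := by rw [← hrep]
    _ = ∑ a, ∑ b, Lmap e (Matrix.single a b (X a b)) := by
        rw [map_sum]
        exact Finset.sum_congr rfl fun a _ => map_sum _ _ _
    _ = 0 := by
        refine Finset.sum_eq_zero fun a _ => Finset.sum_eq_zero fun b _ => ?_
        have h1 : Matrix.single a b (X a b)
            = (X a b) • Matrix.single a b (1:ℂ) := by
          rw [Matrix.smul_single, smul_eq_mul, mul_one]
        rw [h1, LinearMap.map_smul, Lmap_basis_zero horth hmub hd a b, smul_zero]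

end Main



end MUBaux

theorem stmt_1 (d : ℕ) (hd : 2 ≤ d)
    (e : Fin (d + 1) → Fin d → EuclideanSpace ℂ (Fin d))
    (horth : ∀ n, Orthonormal ℂ (e n))
    (hmub : MutuallyUnbiased e)
    (ρ : Matrix (Fin d) (Fin d) ℂ) (hρ : ρ.trace = 1) :
    ρ = (∑ n : Fin (d + 1), ∑ k : Fin d,
          (proj (e n k) * ρ).trace • proj (e n k)) - 1 := by
  have hL := MUBaux.Lmap_eq_zero horth hmub hd ρ
  rw [MUBaux.Lmap_apply, hρ, one_smul, sub_right_comm] at hL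
  have h2 : MUBaux.Smap e ρ - 1 = ρ := sub_eq_zero.mp hL
  rw [← MUBaux.Smap_apply, h2]
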